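/- Let c > 0, x ∈ ℝ, t ∈ ℂ, let p be holomorphic on an open neighbourhood of a point λ₀ ∈ ℂ, and let F(λ₀) ∈ ℂ. Then the kernel V_t(λ₀, μ) extends continuously to the diagonal: lim_{μ → λ₀, μ ≠ λ₀} V_t(λ₀, μ) = (F(λ₀)/(2π)) · ( x·p′(λ₀) + 2t/c ). -/

import Mathlib

open MeasureTheory Complex Set Filter Topology

/-- for `p` holomorphic on an open neighbourhood of `λ₀` and `F₀ = F(λ₀) ∈ ℂ`,
the c-shifted kernel `μ ↦ V_t(λ₀,μ)` extends continuously to the diagonal with value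
`(F(λ₀)/(2π)) (x p'(λ₀) + 2t/c)`. -/
theorem stmt2 (c x : ℝ) (hc : 0 < c) (t : ℂ) (p : ℂ → ℂ) (F₀ : ℂ) (lam₀ : ℂ)
    (U : Set ℂ) (hU : IsOpen U) (hmem : lam₀ ∈ U) (hp : DifferentiableOn ℂ p U) :
    Filter.Tendsto
      (fun mu : ℂ =>
        (Complex.I * c * F₀) / (2 * Real.pi * Complex.I * (lam₀ - mu)) *
          (Complex.exp ((Complex.I * x / 2) * (p lam₀ - p mu)) / (t * (lam₀ - mu) + Complex.I * c)
            + Complex.exp ((Complex.I * x / 2) * (p mu - p lam₀)) / (t * (lam₀ - mu) - Complex.I * c)))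
      (𝓝[≠] lam₀)
      (𝓝 ((F₀ / (2 * Real.pi)) * (x * deriv p lam₀ + 2 * t / c))) := by
  have hc' : (c : ℂ) ≠ 0 := by exact_mod_cast hc.ne'
  have hpi : (Real.pi : ℂ) ≠ 0 := by exact_mod_cast Real.pi_ne_zero
  have hIc : Complex.I * c ≠ 0 := mul_ne_zero Complex.I_ne_zero hc'
  have hP : HasDerivAt p (deriv p lam₀) lam₀ :=
    (hp.differentiableAt (hU.mem_nhds hmem)).hasDerivAt
  set P := deriv p lam₀ with hPdef
  set g : ℂ → ℂ := fun mu =>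
    Complex.exp ((Complex.I * x / 2) * (p mu - p lam₀)) * (t * (lam₀ - mu) - Complex.I * c)⁻¹
    + Complex.exp ((Complex.I * x / 2) * (p lam₀ - p mu)) * (t * (lam₀ - mu) + Complex.I * c)⁻¹
    with hg
  -- derivatives of the exponential factors
  have h1 : HasDerivAt (fun mu => (Complex.I * x / 2) * (p mu - p lam₀))
      ((Complex.I * x / 2) * P) lam₀ := by
    simpa using (hP.sub_const (p lam₀)).const_mul (Complex.I * x / 2)
  have h2 : HasDerivAt (fun mu => (Complex.I * x / 2) * (p lam₀ - p mu))
      ((Complex.I * x / 2) * (-P)) lam₀ := by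
    simpa using (hP.const_sub (p lam₀)).const_mul (Complex.I * x / 2)
  have h1e := h1.cexp
  have h2e := h2.cexp
  -- derivatives of the inverse factors
  have hlin : HasDerivAt (fun mu : ℂ => t * (lam₀ - mu)) (-t) lam₀ := by
    simpa using ((hasDerivAt_id lam₀).const_sub lam₀).const_mul t
  have hq1 : HasDerivAt (fun mu : ℂ => t * (lam₀ - mu) - Complex.I * c) (-t) lam₀ := by
    simpa using hlin.sub_const (Complex.I * c)
  have hq2 : HasDerivAt (fun mu : ℂ => t * (lam₀ - mu) + Complex.I * c) (-t) lam₀ := by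
    simpa using hlin.add_const (Complex.I * c)
  have hq1v : t * (lam₀ - lam₀) - Complex.I * c ≠ 0 := by
    simpa using neg_ne_zero.mpr hIc
  have hq2v : t * (lam₀ - lam₀) + Complex.I * c ≠ 0 := by
    simpa using hIc
  have hq1i := hq1.inv hq1v
  have hq2i := hq2.inv hq2v
  have hgd := (h1e.mul hq1i).add (h2e.mul hq2i)
  rw [show ((Complex.I * x / 2) * (p lam₀ - p lam₀)) = 0 by ring, Complex.exp_zero] at hgd
  set D : ℂ := (1 * ((Complex.I * ↑x / 2) * P) * (t * (lam₀ - lam₀) - Complex.I * ↑c)⁻¹ +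
        1 * (-(-t) / (t * (lam₀ - lam₀) - Complex.I * ↑c) ^ 2)) +
      (1 * ((Complex.I * ↑x / 2) * (-P)) * (t * (lam₀ - lam₀) + Complex.I * ↑c)⁻¹ +
        1 * (-(-t) / (t * (lam₀ - lam₀) + Complex.I * ↑c) ^ 2)) with hD
  have hgd' : HasDerivAt g D lam₀ := hgd
  have hg0 : g lam₀ = 0 := by
    simp only [hg, sub_self, mul_zero, zero_mul, Complex.exp_zero, zero_sub, zero_add,
      one_mul]
    rw [inv_neg]
    ring
  have hslope : Filter.Tendsto (slope g lam₀) (𝓝[≠] lam₀) (𝓝 D) :=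
    hasDerivAt_iff_tendsto_slope.mp hgd'
  have key : Filter.Tendsto (fun mu => (-(c : ℂ) * F₀ / (2 * Real.pi)) * slope g lam₀ mu)
      (𝓝[≠] lam₀) (𝓝 ((-(c : ℂ) * F₀ / (2 * Real.pi)) * D)) := hslope.const_mul _
  have hval : (-(c : ℂ) * F₀ / (2 * Real.pi)) * D
      = (F₀ / (2 * Real.pi)) * (x * P + 2 * t / c) := by
    rw [hD]
    simp only [sub_self, mul_zero, zero_sub, zero_add, one_mul]
    rw [inv_neg]
    field_simp
    ring_nf
    rw [Complex.I_sq]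
    ring
  rw [hval] at key
  refine key.congr' ?_
  filter_upwards [self_mem_nhdsWithin] with mu (hmu : mu ≠ lam₀)
  have hd : lam₀ - mu ≠ 0 := sub_ne_zero.mpr (Ne.symm hmu)
  have hd' : mu - lam₀ ≠ 0 := sub_ne_zero.mpr hmu
  rw [slope_def_field, hg0, sub_zero, hg]
  field_simp
  ring
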